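/- In the setting of the correlated right-truncated Gaussian model with circulant correlation R and ρ = row sum of R^{-1/2}, the maximum X_(n) with CDF F_η(x) = [Φ(ρx)/Φ(ρη)]^n (x < η) satisfies, with a_n = (η - Φ_{ρη}^{-1}(1-1/n)/ρ) appropriately scaled (a_n = (ρη - Φ_{ρη}^{-1}(1-1/n))/ρ) and centering at η: lim_{n→∞} F_η(a_n x + η) = exp(x) for x ≤ 0, the reverse Weibull distribution with shape 1. -/

import Mathlib

open MeasureTheory ProbabilityTheory Filter Real

noncomputable def Phi (x : ℝ) : ℝ := ((gaussianReal 0 1) (Set.Iic x)).toReal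

noncomputable def stdphi (x : ℝ) : ℝ := gaussianPDFReal 0 1 x

lemma stdphi_pos (x : ℝ) : 0 < stdphi x := gaussianPDFReal_pos 0 1 x one_ne_zero

lemma stdphi_continuous : Continuous stdphi := by
  unfold stdphi
  rw [gaussianPDFReal_def]
  continuity

lemma stdphi_integrable : Integrable stdphi := integrable_gaussianPDFReal 0 1

lemma Phi_eq_integral (y : ℝ) : Phi y = ∫ t in Set.Iic y, stdphi t := by
  unfold Phi
  rw [gaussianReal_apply_eq_integral 0 one_ne_zero]
  exact ENNReal.toReal_ofReal (setIntegral_nonneg measurableSet_Iic fun t _ => (stdphi_pos t).le)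

lemma Phi_sub (a b : ℝ) : Phi b - Phi a = ∫ t in a..b, stdphi t := by
  rw [Phi_eq_integral, Phi_eq_integral]
  exact (intervalIntegral.integral_Iic_sub_Iic stdphi_integrable.integrableOn
    stdphi_integrable.integrableOn)

lemma Phi_strictMono : StrictMono Phi := by
  intro a b hab
  have h : 0 < Phi b - Phi a := by
    rw [Phi_sub]
    exact intervalIntegral.intervalIntegral_pos_of_pos
      (stdphi_integrable.intervalIntegrable) (fun t => stdphi_pos t) hab
  linarith

lemma hasDerivAt_Phi (c : ℝ) : HasDerivAt Phi (stdphi c) c := by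
  have h : HasDerivAt (fun u => ∫ t in (0:ℝ)..u, stdphi t) (stdphi c) c :=
    intervalIntegral.integral_hasDerivAt_right (stdphi_integrable.intervalIntegrable)
      (stdphi_continuous.stronglyMeasurable.stronglyMeasurableAtFilter)
      stdphi_continuous.continuousAt
  have : Phi = fun u => Phi 0 + ∫ t in (0:ℝ)..u, stdphi t := by
    funext u
    rw [← Phi_sub]; ring
  rw [this]
  simpa using (h.const_add (Phi 0))

lemma Phi_continuous : Continuous Phi := by
  have : Differentiable ℝ Phi := fun c => (hasDerivAt_Phi c).differentiableAt
  exact this.continuous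

lemma Phi_pos (x : ℝ) : 0 < Phi x := by
  have h0 : (gaussianReal 0 1) (Set.Iic x) ≠ 0 := by
    intro h
    have := (gaussianReal_absolutelyContinuous' 0 one_ne_zero) h
    simp [Real.volume_Iic] at this
  have hlt : (gaussianReal 0 1) (Set.Iic x) ≠ ⊤ := measure_ne_top _ _
  unfold Phi
  exact ENNReal.toReal_pos h0 hlt

lemma Phi_lt_one (x : ℝ) : Phi x < 1 := by
  have h1 : Phi (x+1) - Phi x > 0 := by
    have := Phi_strictMono (show x < x + 1 by linarith); linarith
  have h2 : Phi (x+1) ≤ 1 := by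
    unfold Phi
    rw [← ENNReal.toReal_one]
    exact ENNReal.toReal_mono ENNReal.one_ne_top (prob_le_one)
  linarith

lemma Phi_eq_cdf : Phi = cdf (gaussianReal 0 1) := by
  funext y; rw [cdf_eq_real]; rfl

lemma Phi_tendsto_atTop : Tendsto Phi atTop (nhds 1) := by
  rw [Phi_eq_cdf]; exact tendsto_cdf_atTop _

lemma Phi_tendsto_atBot : Tendsto Phi atBot (nhds 0) := by
  rw [Phi_eq_cdf]; exact tendsto_cdf_atBot _

lemma Phi_surj {p : ℝ} (h0 : 0 < p) (h1 : p < 1) : ∃ y, Phi y = p := by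
  obtain ⟨a, ha⟩ := (Phi_tendsto_atBot.eventually (eventually_lt_nhds h0)).exists
  obtain ⟨b, hb⟩ := (Phi_tendsto_atTop.eventually (eventually_gt_nhds h1)).exists
  have := intermediate_value_univ a b Phi_continuous
  have hp : p ∈ Set.Icc (Phi a) (Phi b) := ⟨ha.le, hb.le⟩
  exact this hp

noncomputable def PhiInv (p : ℝ) : ℝ := Function.invFun Phi p

noncomputable def truncQuantile (η p : ℝ) : ℝ := PhiInv (p * Phi η)

lemma Phi_invFun_eq {p : ℝ} (h0 : 0 < p) (h1 : p < 1) : Phi (PhiInv p) = p :=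
  Function.invFun_eq (Phi_surj h0 h1)

/-- Reverse Weibull limit for the maximum of the correlated truncated Gaussian model:
with a_n = (ρη - Φ_{ρη}^{-1}(1-1/n))/ρ and centering at η,
F_η(a_n x + η) = [Φ(ρ(a_n x + η))/Φ(ρη)]^n → exp(x) for x ≤ 0. -/
theorem stmt9 (ρ η : ℝ) (hρ : 0 < ρ) (x : ℝ) (hx : x ≤ 0) :
    Filter.Tendsto (fun n : ℕ =>
      (Phi (ρ * ((ρ * η - truncQuantile (ρ * η) (1 - 1 / n)) / ρ * x + η))
        / Phi (ρ * η)) ^ n)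
      Filter.atTop (nhds (Real.exp x)) := by
  rcases hx.lt_or_eq with hxneg | hx0
  swap
  · subst hx0
    simp only [mul_zero, zero_add, div_self (Phi_pos (ρ*η)).ne', one_pow, Real.exp_zero]
    exact tendsto_const_nhds
  set c := ρ * η with hc
  have hc0 : 0 < Phi c := Phi_pos c
  have hc1 : Phi c < 1 := Phi_lt_one c
  set q : ℕ → ℝ := fun n => PhiInv ((1 - 1/(n:ℝ)) * Phi c) with hqdef
  set y : ℕ → ℝ := fun n => (c - q n) * x + c with hydef
  have hp_mem : ∀ n : ℕ, 2 ≤ n → 0 < (1 - 1/(n:ℝ)) * Phi c ∧ (1 - 1/(n:ℝ)) * Phi c < Phi c := by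
    intro n hn
    have h2 : (2:ℝ) ≤ (n:ℝ) := by exact_mod_cast hn
    have hn0 : (0:ℝ) < n := by linarith
    have hpos : 0 < 1/(n:ℝ) := by positivity
    have hle : 1/(n:ℝ) ≤ 1/2 := by
      rw [div_le_div_iff₀ hn0 (by norm_num)]; linarith
    constructor
    · nlinarith
    · nlinarith
  have hΦq : ∀ n : ℕ, 2 ≤ n → Phi (q n) = (1 - 1/(n:ℝ)) * Phi c := fun n hn =>
    Phi_invFun_eq (hp_mem n hn).1 ((hp_mem n hn).2.trans hc1)
  have hqlt : ∀ n : ℕ, 2 ≤ n → q n < c := by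
    intro n hn
    exact Phi_strictMono.lt_iff_lt.mp (by rw [hΦq n hn]; exact (hp_mem n hn).2)
  have hp_tend : Tendsto (fun n : ℕ => (1 - 1/(n:ℝ)) * Phi c) atTop (nhds (Phi c)) := by
    have h := tendsto_one_div_atTop_nhds_zero_nat (𝕜 := ℝ)
    have := ((tendsto_const_nhds (x := (1:ℝ))).sub h).mul (tendsto_const_nhds (x := Phi c))
    simpa using this
  have hq_tend : Tendsto q atTop (nhds c) := by
    refine tendsto_order.2 ⟨?_, ?_⟩
    · intro a ha
      have hPa : Phi a < Phi c := Phi_strictMono ha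
      filter_upwards [hp_tend.eventually (eventually_gt_nhds hPa), eventually_ge_atTop 2]
        with n hn1 hn2
      exact Phi_strictMono.lt_iff_lt.mp (by rw [hΦq n hn2]; exact hn1)
    · intro b hb
      filter_upwards [eventually_ge_atTop 2] with n hn
      exact (hqlt n hn).trans hb
  have hy_tend : Tendsto y atTop (nhds c) := by
    have : Tendsto (fun n => (c - q n) * x + c) atTop (nhds ((c - c) * x + c)) :=
      ((tendsto_const_nhds.sub hq_tend).mul tendsto_const_nhds).add tendsto_const_nhds
    simpa using this
  have hylt : ∀ n : ℕ, 2 ≤ n → y n < c := by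
    intro n hn
    have h1 : 0 < c - q n := sub_pos.2 (hqlt n hn)
    have h2 : (c - q n) * x < 0 := mul_neg_of_pos_of_neg h1 hxneg
    simp only [hydef]
    linarith
  have hslope := hasDerivAt_iff_tendsto_slope.mp (hasDerivAt_Phi c)
  have hy_ne : Tendsto y atTop (nhds c ⊓ Filter.principal {c}ᶜ) := by
    rw [tendsto_inf]
    refine ⟨hy_tend, ?_⟩
    rw [tendsto_principal]
    filter_upwards [eventually_ge_atTop 2] with n hn
    exact Set.mem_compl_singleton_iff.mpr (hylt n hn).ne
  have hq_ne : Tendsto q atTop (nhds c ⊓ Filter.principal {c}ᶜ) := by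
    rw [tendsto_inf]
    refine ⟨hq_tend, ?_⟩
    rw [tendsto_principal]
    filter_upwards [eventually_ge_atTop 2] with n hn
    exact Set.mem_compl_singleton_iff.mpr (hqlt n hn).ne
  have hsy : Tendsto (fun n => slope Phi c (y n)) atTop (nhds (stdphi c)) := hslope.comp hy_ne
  have hsq : Tendsto (fun n => slope Phi c (q n)) atTop (nhds (stdphi c)) := hslope.comp hq_ne
  have hA : Tendsto (fun n => -x * slope Phi c (y n) / slope Phi c (q n)) atTop (nhds (-x)) := by
    have := ((tendsto_const_nhds (x := -x)).mul hsy).div hsq (stdphi_pos c).ne'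
    have h2 : -x * stdphi c / stdphi c = -x := by
      rw [mul_div_assoc, div_self (stdphi_pos c).ne', mul_one]
    rwa [h2] at this
  set r : ℕ → ℝ := fun n => (Phi c - Phi (y n)) / Phi c with hrdef
  have hr_tend : Tendsto r atTop (nhds 0) := by
    have hPy : Tendsto (fun n => Phi (y n)) atTop (nhds (Phi c)) :=
      (Phi_continuous.tendsto c).comp hy_tend
    have := ((tendsto_const_nhds (x := Phi c)).sub hPy).div_const (Phi c)
    simpa using this
  have hr_pos : ∀ n : ℕ, 2 ≤ n → 0 < r n := fun n hn =>
    div_pos (sub_pos.2 (Phi_strictMono (hylt n hn))) hc0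
  have hnr : ∀ᶠ n : ℕ in atTop,
      -x * slope Phi c (y n) / slope Phi c (q n) = (n:ℝ) * r n := by
    filter_upwards [eventually_ge_atTop 2] with n hn
    have h2 : (2:ℝ) ≤ (n:ℝ) := by exact_mod_cast hn
    have hn0 : (n:ℝ) ≠ 0 := by linarith
    have hcq : c - q n ≠ 0 := sub_ne_zero.2 (hqlt n hn).ne'
    have hyc : y n - c = (c - q n) * x := by simp only [hydef]; ring
    have key : ∀ P C d N : ℝ, C ≠ 0 → d ≠ 0 → N ≠ 0 →
        -x * ((P - C)/(d*x)) / (((1-1/N)*C - C)/(-d)) = N * ((C - P)/C) := by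
      intro P C d N hC hd hN
      have hx' : x ≠ 0 := hxneg.ne
      have e1 : (1-1/N)*C - C = -(C/N) := by field_simp; ring
      have e2 : -x * ((P - C)/(d*x)) = (C-P)/d := by
        field_simp
        ring
      have e3 : -(C/N)/(-d) = C/(N*d) := by rw [neg_div_neg_eq, div_div]
      rw [e1, e2, e3, div_div_eq_mul_div]
      have e4 : (C-P)/d*(N*d) = N*(C-P) := by
        rw [mul_comm N d, ← mul_assoc, div_mul_cancel₀ _ hd, mul_comm]
      rw [e4, mul_div_assoc]
    have hrw : q n - c = -(c - q n) := by ring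
    rw [slope_def_field, slope_def_field, hΦq n hn, hyc, hrw]
    exact key (Phi (y n)) (Phi c) (c - q n) (n:ℝ) hc0.ne' hcq hn0
  have hnr_tend : Tendsto (fun n : ℕ => (n:ℝ) * r n) atTop (nhds (-x)) := hA.congr' hnr
  have hlog : Tendsto (fun n => Real.log (1 - r n) / (-(r n))) atTop (nhds 1) := by
    have hld := hasDerivAt_iff_tendsto_slope.mp (Real.hasDerivAt_log one_ne_zero)
    have h1r : Tendsto (fun n => 1 - r n) atTop (nhds (1:ℝ) ⊓ Filter.principal {(1:ℝ)}ᶜ) := by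
      rw [tendsto_inf]
      constructor
      · simpa using (tendsto_const_nhds (x := (1:ℝ))).sub hr_tend
      · rw [tendsto_principal]
        filter_upwards [eventually_ge_atTop 2] with n hn
        have := (hr_pos n hn).ne'
        simp only [Set.mem_compl_singleton_iff]
        intro h
        exact this (by linarith)
    have hcomp := hld.comp h1r
    have heq : ∀ᶠ n : ℕ in atTop,
        slope Real.log 1 (1 - r n) = Real.log (1 - r n) / (-(r n)) := by
      filter_upwards with n
      rw [slope_def_field, Real.log_one]
      ring_nf
    have := hcomp.congr' heq
    simpa using this
  have hmul := hnr_tend.mul hlog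
  have heq2 : ∀ᶠ n : ℕ in atTop,
      (n:ℝ) * r n * (Real.log (1 - r n) / (-(r n))) = -((n:ℝ) * Real.log (1 - r n)) := by
    filter_upwards [eventually_ge_atTop 2] with n hn
    have hrne : r n ≠ 0 := (hr_pos n hn).ne'
    have key2 : ∀ N R L : ℝ, R ≠ 0 → N * R * (L / -R) = -(N * L) := by
      intro N R L hR
      rw [div_neg, mul_neg, mul_assoc, mul_comm R, div_mul_cancel₀ _ hR]
    exact key2 (n:ℝ) (r n) (Real.log (1 - r n)) hrne
  have hnl : Tendsto (fun n : ℕ => (n:ℝ) * Real.log (1 - r n)) atTop (nhds x) := by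
    have h1 : Tendsto (fun n : ℕ => -((n:ℝ) * Real.log (1 - r n))) atTop (nhds (-x * 1)) :=
      hmul.congr' heq2
    have := h1.neg
    simpa using this
  have hexp := (Real.continuous_exp.tendsto x).comp hnl
  refine Filter.Tendsto.congr' ?_ hexp
  filter_upwards [eventually_ge_atTop 2] with n hn
  have harg : ρ * ((ρ * η - truncQuantile (ρ * η) (1 - 1 / (n:ℝ))) / ρ * x + η) = y n := by
    have key4 : ∀ Q : ℝ, ρ * ((c - Q)/ρ * x + η) = (c - Q)*x + c := by
      intro Q
      field_simp
      ring
    exact key4 (q n)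
  have h1r : Phi (y n) / Phi c = 1 - r n := by
    have key3 : ∀ P C : ℝ, C ≠ 0 → P / C = 1 - (C - P)/C := by
      intro P C hC
      field_simp
      ring
    exact key3 (Phi (y n)) (Phi c) hc0.ne'
  have hpos : 0 < 1 - r n := by rw [← h1r]; exact div_pos (Phi_pos _) hc0
  show Real.exp ((n:ℝ) * Real.log (1 - r n)) = _
  rw [harg, h1r, Real.exp_nat_mul, Real.exp_log hpos]
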